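/- Let X1,...,XN be real numbers, p = (p1,...,pN) and q = (q1,...,qN) points of the standard simplex Δ^{N-1} = {p ∈ [0,1]^N : p1+...+pN = 1}, and define z(p) ∈ ℝ^N by z(p)_i = p_i * (X_i - p·X), where p·X = Σ p_j X_j. Then ‖z(p) - z(q)‖ ≤ 3 ‖X‖ ‖p - q‖, where ‖·‖ denotes the Euclidean norm. -/

import Mathlib

open scoped BigOperators

/-- Coordinate bound in Euclidean space. -/
lemma coord_abs_le_norm {N : ℕ} (x : EuclideanSpace ℝ (Fin N)) (i : Fin N) :
    |x i| ≤ ‖x‖ := by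
  rw [EuclideanSpace.norm_eq]
  have h1 : ‖x i‖ ^ 2 ≤ ∑ j, ‖x j‖ ^ 2 :=
    Finset.single_le_sum (f := fun j => ‖x j‖ ^ 2) (fun j _ => sq_nonneg _) (Finset.mem_univ i)
  calc |x i| = Real.sqrt (‖x i‖ ^ 2) := by
        rw [Real.sqrt_sq (norm_nonneg _)]; simp [Real.norm_eq_abs]
    _ ≤ _ := Real.sqrt_le_sqrt h1

/-- Norm of a simplex point is at most 1. -/
lemma simplex_norm_le_one {N : ℕ} (q : EuclideanSpace ℝ (Fin N))
    (hq0 : ∀ i, 0 ≤ q i) (hq1 : ∑ i, q i = 1) : ‖q‖ ≤ 1 := by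
  rw [EuclideanSpace.norm_eq]
  have hle1 : ∀ i, q i ≤ 1 := by
    intro i
    calc q i ≤ ∑ j, q j := Finset.single_le_sum (fun j _ => hq0 j) (Finset.mem_univ i)
      _ = 1 := hq1
  have : ∑ j, ‖q j‖ ^ 2 ≤ ∑ j, q j := by
    apply Finset.sum_le_sum
    intro j _
    rw [Real.norm_eq_abs, sq_abs, sq]
    exact mul_le_of_le_one_left (hq0 j) (hle1 j)
  calc Real.sqrt (∑ j, ‖q j‖ ^ 2) ≤ Real.sqrt 1 := Real.sqrt_le_sqrt (by rw [hq1] at this; exact this)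
    _ = 1 := Real.sqrt_one

/-- Componentwise product norm bound. -/
lemma prod_norm_le {N : ℕ} (a b : EuclideanSpace ℝ (Fin N)) :
    ‖((WithLp.equiv 2 ((i : Fin N) → ℝ)).symm fun i => a i * b i : EuclideanSpace ℝ (Fin N))‖
      ≤ ‖a‖ * ‖b‖ := by
  rw [EuclideanSpace.norm_eq, EuclideanSpace.norm_eq, EuclideanSpace.norm_eq,
    ← Real.sqrt_mul (by positivity)]
  apply Real.sqrt_le_sqrt
  calc ∑ i, ‖(WithLp.equiv 2 ((i : Fin N) → ℝ)).symm (fun i => a i * b i) i‖ ^ 2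
      = ∑ i, ‖a i‖ ^ 2 * ‖b i‖ ^ 2 := by
        apply Finset.sum_congr rfl
        intro i _
        simp [Real.norm_eq_abs, abs_mul, mul_pow]
    _ ≤ ∑ i, ‖a i‖ ^ 2 * (∑ j, ‖b j‖ ^ 2) := by
        apply Finset.sum_le_sum
        intro i _
        exact mul_le_mul_of_nonneg_left
          (Finset.single_le_sum (f := fun j => ‖b j‖ ^ 2) (fun j _ => sq_nonneg _)
            (Finset.mem_univ i)) (sq_nonneg _)
    _ = (∑ i, ‖a i‖ ^ 2) * (∑ j, ‖b j‖ ^ 2) := by rw [← Finset.sum_mul]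

/-- The vector `z(p)` with `z(p)_i = p_i (X_i - p·X)`. -/
noncomputable def zVec (N : ℕ) (X p : EuclideanSpace ℝ (Fin N)) : EuclideanSpace ℝ (Fin N) :=
  (WithLp.equiv 2 ((i : Fin N) → ℝ)).symm fun i => p i * (X i - ∑ j, p j * X j)

/-- Lipschitz estimate: for `p, q` in the simplex,
`‖z(p) - z(q)‖ ≤ 3 ‖X‖ ‖p - q‖` (Euclidean norms). -/
theorem stmt8 (N : ℕ) (X p q : EuclideanSpace ℝ (Fin N))
    (hp0 : ∀ i, 0 ≤ p i) (hp1 : ∑ i, p i = 1)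
    (hq0 : ∀ i, 0 ≤ q i) (hq1 : ∑ i, q i = 1) :
    ‖zVec N X p - zVec N X q‖ ≤ 3 * ‖X‖ * ‖p - q‖ := by
  set A : EuclideanSpace ℝ (Fin N) :=
    (WithLp.equiv 2 ((i : Fin N) → ℝ)).symm fun i => (p - q) i * X i with hA
  set B : EuclideanSpace ℝ (Fin N) := (∑ j, p j * X j) • (p - q) with hB
  set C : EuclideanSpace ℝ (Fin N) := (∑ j, (p j - q j) * X j) • q with hC
  have hdecomp : zVec N X p - zVec N X q = A - B - C := by
    ext i
    simp only [zVec, hA, hB, hC, PiLp.sub_apply, PiLp.smul_apply, smul_eq_mul,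
      WithLp.equiv_symm_apply, PiLp.toLp_apply]
    have : ∑ j, (p j - q j) * X j = (∑ j, p j * X j) - ∑ j, q j * X j := by
      rw [← Finset.sum_sub_distrib]
      exact Finset.sum_congr rfl fun j _ => by ring
    rw [this]
    ring
  -- bounds
  have hXi : ∀ i, |X i| ≤ ‖X‖ := coord_abs_le_norm X
  have hpX : |∑ j, p j * X j| ≤ ‖X‖ := by
    calc |∑ j, p j * X j| ≤ ∑ j, |p j * X j| := Finset.abs_sum_le_sum_abs _ _
      _ ≤ ∑ j, p j * ‖X‖ := by
          apply Finset.sum_le_sum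
          intro j _
          rw [abs_mul, abs_of_nonneg (hp0 j)]
          exact mul_le_mul_of_nonneg_left (hXi j) (hp0 j)
      _ = ‖X‖ := by rw [← Finset.sum_mul, hp1, one_mul]
  have hA_bound : ‖A‖ ≤ ‖X‖ * ‖p - q‖ := by
    rw [mul_comm]
    exact prod_norm_le (p - q) X
  have hB_bound : ‖B‖ ≤ ‖X‖ * ‖p - q‖ := by
    rw [hB, norm_smul, Real.norm_eq_abs]
    exact mul_le_mul_of_nonneg_right hpX (norm_nonneg _)
  have hC_bound : ‖C‖ ≤ ‖X‖ * ‖p - q‖ := by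
    rw [hC, norm_smul, Real.norm_eq_abs]
    have hinner : |∑ j, (p j - q j) * X j| ≤ ‖p - q‖ * ‖X‖ := by
      have := abs_real_inner_le_norm (p - q) X
      rw [PiLp.inner_apply] at this
      simpa [PiLp.sub_apply, mul_comm] using this
    calc |∑ j, (p j - q j) * X j| * ‖q‖ ≤ (‖p - q‖ * ‖X‖) * 1 := by
          apply mul_le_mul hinner (simplex_norm_le_one q hq0 hq1) (norm_nonneg _) (by positivity)
      _ = ‖X‖ * ‖p - q‖ := by ring
  calc ‖zVec N X p - zVec N X q‖ = ‖A - B - C‖ := by rw [hdecomp]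
    _ ≤ ‖A - B‖ + ‖C‖ := norm_sub_le _ _
    _ ≤ ‖A‖ + ‖B‖ + ‖C‖ := by linarith [norm_sub_le A B]
    _ ≤ 3 * ‖X‖ * ‖p - q‖ := by linarith
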